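/- Termination of the resolution procedure: let P be a finite set of n proposition symbols, and identify SNF clauses over P whose left-hand conjunctions have the same underlying set of literals and whose right-hand disjunctions have the same underlying set of literals. Then there are only finitely many SNF clauses over P up to this identification; consequently, any process that starts from a finite augmented SNF clause set over P and repeatedly adds SNF clauses over P that are new up to this identification (as the step and temporal resolution rules do, since they introduce no new proposition symbols after augmentation) must terminate. -/
import Mathlib


/-- A literal over proposition symbols `P`. -/
structure Lit (P : Type) where
  pos : Bool
  sym : P

/-- SNF clauses over `P`: initial clauses `start ⇒ ⋁ rhs`, step clauses
`⋀ lhs ⇒ ◯⋁ rhs` (empty `lhs` is the constant `true`), and sometime clauses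
`⋀ lhs ⇒ ◇ev`. -/
inductive SNF (P : Type) : Type
  | initial (rhs : List (Lit P))
  | step (lhs rhs : List (Lit P))
  | sometime (lhs : List (Lit P)) (ev : Lit P)

/-- Two lists of literals have the same underlying set of literals. -/
def listEquiv {P : Type} (A B : List (Lit P)) : Prop := ∀ l, l ∈ A ↔ l ∈ B

/-- Identification of SNF clauses: clauses of the same kind whose left-hand
conjunctions have the same underlying set of literals and whose right-hand
disjunctions have the same underlying set of literals. -/
def clauseEquiv {P : Type} : SNF P → SNF P → Prop
  | .initial A, .initial B => listEquiv A B
  | .step C A, .step D B => listEquiv C D ∧ listEquiv A B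
  | .sometime C l, .sometime D l' => listEquiv C D ∧ l = l'
  | _, _ => False


instance {P : Type} [Finite P] : Finite (Lit P) :=
  Finite.of_injective (fun l => (l.pos, l.sym)) (by
    rintro ⟨a, b⟩ ⟨c, d⟩ h; simpa using h)

/-- Invariant of a clause: its kind together with underlying sets of literals. -/
def toSets {P : Type} : SNF P → (Set (Lit P)) ⊕ (Set (Lit P) × Set (Lit P)) ⊕ (Set (Lit P) × Lit P)
  | .initial A => .inl {l | l ∈ A}
  | .step C A => .inr (.inl ({l | l ∈ C}, {l | l ∈ A}))
  | .sometime C l => .inr (.inr ({l | l ∈ C}, l))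

lemma listEquiv_iff {P : Type} {A B : List (Lit P)} :
    listEquiv A B ↔ ({l | l ∈ A} : Set (Lit P)) = {l | l ∈ B} := by
  constructor
  · intro h; ext l; exact h l
  · intro h l; exact Set.ext_iff.mp h l

lemma toSets_eq_iff {P : Type} {a b : SNF P} : toSets a = toSets b ↔ clauseEquiv a b := by
  cases a <;> cases b <;>
    simp [toSets, clauseEquiv, listEquiv_iff, Prod.ext_iff]

lemma eqvGen_clauseEquiv {P : Type} {a b : SNF P} (h : Relation.EqvGen clauseEquiv a b) :
    clauseEquiv a b := by
  induction h with
  | rel a b hab => exact hab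
  | refl a => rw [← toSets_eq_iff]
  | symm a b _ ih => rw [← toSets_eq_iff] at ih ⊢; exact ih.symm
  | trans a b c _ _ ih1 ih2 => rw [← toSets_eq_iff] at ih1 ih2 ⊢; exact ih1.trans ih2

lemma clauseEquiv_equivalence {P : Type} : Equivalence (@clauseEquiv P) := by
  constructor
  · intro a; rw [← toSets_eq_iff]
  · intro a b h; rw [← toSets_eq_iff] at h ⊢; exact h.symm
  · intro a b c h1 h2; rw [← toSets_eq_iff] at h1 h2 ⊢; exact h1.trans h2

/-- over a finite set `P` of proposition symbols there are only finitely
many SNF clauses up to the above identification; consequently any process starting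
from a finite clause set over `P` which at each stage adds an SNF clause over `P` that
is new up to the identification must terminate (there is no such infinite process). -/
theorem stmt_15 {P : Type} [Fintype P] :
    Finite (Quot (@clauseEquiv P)) ∧
    ∀ T : ℕ → Set (SNF P), (T 0).Finite →
      ¬ (∀ n : ℕ, ∃ c : SNF P,
          (∀ c' ∈ T n, ¬ clauseEquiv c c') ∧ T (n + 1) = insert c (T n)) := by
  have hfin : Finite (Quot (@clauseEquiv P)) := by
    apply Finite.of_injective (Quot.lift toSets (fun a b h => toSets_eq_iff.mpr h))
    intro x y
    induction x using Quot.ind with | _ a =>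
    induction y using Quot.ind with | _ b =>
    intro h
    exact Quot.sound (toSets_eq_iff.mp h)
  refine ⟨hfin, ?_⟩
  intro T _ H
  choose c hnew hins using H
  have hmono : ∀ m n, m ≤ n → T m ⊆ T n := by
    intro m n hmn
    induction n with
    | zero => simp [Nat.le_zero.mp hmn]
    | succ k ih =>
      rcases Nat.lt_or_ge m (k+1) with h | h
      · intro x hx
        rw [hins k]
        exact Set.mem_insert_of_mem _ (ih (Nat.lt_succ_iff.mp h) hx)
      · have : m = k + 1 := le_antisymm hmn h
        subst this; exact fun _ h => h
  have hmem : ∀ n, c n ∈ T (n+1) := by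
    intro n; rw [hins n]; exact Set.mem_insert _ _
  have key : ∀ m n : ℕ, m < n → ¬ clauseEquiv (c n) (c m) := by
    intro m n hlt
    exact hnew n (c m) (hmono (m+1) n hlt (hmem m))
  obtain ⟨m, n, hne, h⟩ := Finite.exists_ne_map_eq_of_infinite
    (fun n => Quot.mk (@clauseEquiv P) (c n))
  have hce : clauseEquiv (c m) (c n) := eqvGen_clauseEquiv (Quot.eq.mp h)
  rcases Nat.lt_or_gt_of_ne hne with hlt | hlt
  · exact key m n hlt (clauseEquiv_equivalence.symm hce)
  · exact key n m hlt hce
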